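/- Let S₁,…,Sₙ be pairwise disjoint polyominoes in ℤ×ℤ, each of which is y-monotone, with regions R₁,…,Rₙ ⊆ ℝ². Then the system can be spread apart using only horizontal translations: for every d > 0 there exists a valid motion g₁,…,gₙ of R₁,…,Rₙ in which each g_i(t) is a horizontal translation (g_i(t)(x,y) = (x + c_i(t), y) for some c_i(t) ∈ ℝ), and at time 1 the sets g_i(1)''(R_i) and g_j(1)''(R_j) are at (infimum) distance at least d from each other for all i ≠ j. -/

import Mathlib

noncomputable section

/-- The Euclidean plane. -/
abbrev Plane := EuclideanSpace ℝ (Fin 2)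

/-- Two cells of `ℤ × ℤ` are edge-adjacent iff they are at Euclidean distance 1. -/
def EdgeAdj (c d : ℤ × ℤ) : Prop := (c.1 - d.1).natAbs + (c.2 - d.2).natAbs = 1

/-- A polyomino: a finite nonempty edge-connected set of cells. -/
def IsPolyomino (S : Finset (ℤ × ℤ)) : Prop :=
  S.Nonempty ∧ ∀ c ∈ S, ∀ d ∈ S,
    Relation.ReflTransGen (fun a b => a ∈ S ∧ b ∈ S ∧ EdgeAdj a b) c d

/-- The region of a polyomino: the union of the closed unit squares of its cells. -/
def Region (S : Finset (ℤ × ℤ)) : Set Plane :=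
  {p | ∃ c ∈ S, p 0 ∈ Set.Icc (c.1 : ℝ) (c.1 + 1) ∧ p 1 ∈ Set.Icc (c.2 : ℝ) (c.2 + 1)}

/-- A valid motion of the sets `R i`: each `g i t` is an isometry of the plane, `g i 0 = id`,
`(t, x) ↦ g i t x` is continuous, and at every time the interiors of the moved sets are
pairwise disjoint. -/
def IsValidMotion {n : ℕ} (R : Fin n → Set Plane)
    (g : Fin n → unitInterval → Plane → Plane) : Prop :=
  (∀ i t, Isometry (g i t)) ∧
  (∀ i, g i 0 = id) ∧
  (∀ i, Continuous fun q : unitInterval × Plane => g i q.1 q.2) ∧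
  ∀ t, Pairwise fun i j => Disjoint (interior (g i t '' R i)) (interior (g j t '' R j))

/-- The infimum distance between two subsets of the plane. -/
def setDist (A B : Set Plane) : ℝ := sInf (Set.image2 dist A B)


/-- `S` is y-monotone: every row of `S` is an interval of `ℤ`. -/
def YMonotone (S : Finset (ℤ × ℤ)) : Prop :=
  ∀ r a b c : ℤ, (a, r) ∈ S → (c, r) ∈ S → a ≤ b → b ≤ c → (b, r) ∈ S



-- ===== auxiliary combinatorial lemmas =====

lemma poly_rows_convex {S : Finset (ℤ × ℤ)} (h : IsPolyomino S) {a b r1 r2 r : ℤ}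
    (ha : (a, r1) ∈ S) (hb : (b, r2) ∈ S) (h1 : r1 ≤ r) (h2 : r ≤ r2) :
    ∃ x, (x, r) ∈ S := by
  have key : ∀ d : ℤ × ℤ,
      Relation.ReflTransGen (fun a b => a ∈ S ∧ b ∈ S ∧ EdgeAdj a b) (a, r1) d →
      ∀ r, min r1 d.2 ≤ r → r ≤ max r1 d.2 → ∃ x, (x, r) ∈ S := by
    intro d hd
    induction hd with
    | refl =>
      intro r hr1 hr2
      simp only [min_self, max_self] at hr1 hr2
      exact ⟨a, by rwa [le_antisymm hr2 hr1]⟩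
    | tail hcb hR ih =>
      rename_i p q
      intro r hr1 hr2
      obtain ⟨hpS, hqS, hadj⟩ := hR
      unfold EdgeAdj at hadj
      by_cases hrd : r = q.2
      · refine ⟨q.1, ?_⟩
        have : (q.1, r) = q := by rw [hrd]
        rwa [this]
      · exact ih r (by omega) (by omega)
  exact key (b, r2) (h.2 _ ha _ hb) r (by simp; omega) (by simp; omega)

lemma poly_adj_share {S : Finset (ℤ × ℤ)} (h : IsPolyomino S) {a b r : ℤ}
    (ha : (a, r) ∈ S) (hb : (b, r + 1) ∈ S) :
    ∃ x, (x, r) ∈ S ∧ (x, r + 1) ∈ S := by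
  have key : ∀ c : ℤ × ℤ,
      Relation.ReflTransGen (fun a b => a ∈ S ∧ b ∈ S ∧ EdgeAdj a b) c (b, r + 1) →
      c.2 ≤ r → ∃ x, (x, r) ∈ S ∧ (x, r + 1) ∈ S := by
    intro c hc
    induction hc using Relation.ReflTransGen.head_induction_on with
    | refl => intro hle; simp at hle
    | head hR hrest ih =>
      rename_i p q
      intro hle
      obtain ⟨hpS, hqS, hadj⟩ := hR
      by_cases hq2 : q.2 ≤ r
      · exact ih hq2
      · unfold EdgeAdj at hadj
        have h1 : p.1 = q.1 := by omega
        have h2 : p.2 = r := by omega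
        have h3 : q.2 = r + 1 := by omega
        refine ⟨p.1, ?_, ?_⟩
        · have : (p.1, r) = p := by rw [← h2]
          rwa [this]
        · have : (p.1, r + 1) = q := by rw [h1, ← h3]
          rwa [this]
  exact key (a, r) (h.2 _ ha _ hb) (le_refl r)

def LeftOf (A B : Finset (ℤ × ℤ)) (r : ℤ) : Prop :=
  (∃ x, (x, r) ∈ A) ∧ (∃ y, (y, r) ∈ B) ∧ ∀ x y, (x, r) ∈ A → (y, r) ∈ B → x < y

lemma row_total {A B : Finset (ℤ × ℤ)} (hAB : Disjoint A B) (hA : YMonotone A)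
    (hB : YMonotone B) {r a b : ℤ} (ha : (a, r) ∈ A) (hb : (b, r) ∈ B) :
    LeftOf A B r ∨ LeftOf B A r := by
  have hd : ∀ x : ℤ, (x, r) ∈ A → (x, r) ∈ B → False := fun x h1 h2 =>
    Finset.disjoint_left.mp hAB h1 h2
  by_contra hcon
  push_neg at hcon
  obtain ⟨h1, h2⟩ := hcon
  simp only [LeftOf, not_and, not_forall] at h1 h2
  obtain ⟨x1, y1, hx1, hy1, hlt1⟩ := h1 ⟨a, ha⟩ ⟨b, hb⟩
  obtain ⟨x2, y2, hx2, hy2, hlt2⟩ := h2 ⟨b, hb⟩ ⟨a, ha⟩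
  push_neg at hlt1 hlt2
  -- x1 ∈ A, y1 ∈ B, y1 ≤ x1 ; x2 ∈ B, y2 ∈ A, y2 ≤ x2
  have hne1 : y1 ≠ x1 := fun h => hd x1 hx1 (h ▸ hy1)
  have hne2 : y2 ≠ x2 := fun h => hd y2 hy2 (h ▸ hx2)
  by_cases hc : y2 ≤ y1
  · exact hd y1 (hA r y2 y1 x1 hy2 hx1 hc (by omega)) hy1
  · exact hd y2 hy2 (hB r y1 y2 x2 hy1 hx2 (by omega) hlt2)

lemma leftOf_compose {A B C : Finset (ℤ × ℤ)} {r : ℤ}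
    (hab : LeftOf A B r) (hbc : LeftOf B C r) : LeftOf A C r := by
  obtain ⟨hA, ⟨y, hy⟩, h1⟩ := hab
  obtain ⟨_, hC, h2⟩ := hbc
  exact ⟨hA, hC, fun x z hx hz => lt_trans (h1 x y hx hy) (h2 y z hy hz)⟩

lemma leftOf_asymm {A B : Finset (ℤ × ℤ)} {r : ℤ}
    (hab : LeftOf A B r) (hba : LeftOf B A r) : False := by
  obtain ⟨⟨x, hx⟩, _, h1⟩ := hab
  obtain ⟨⟨y, hy⟩, _, h2⟩ := hba
  exact absurd (h1 x y hx hy) (not_lt.mpr (le_of_lt (h2 y x hy hx)))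

lemma leftOf_consistent {A B : Finset (ℤ × ℤ)} (hA : IsPolyomino A) (hB : IsPolyomino B)
    (hABd : Disjoint A B) (hAm : YMonotone A) (hBm : YMonotone B)
    {r r' : ℤ} (h : LeftOf A B r) (hA' : ∃ x, (x, r') ∈ A) (hB' : ∃ y, (y, r') ∈ B) :
    LeftOf A B r' := by
  obtain ⟨xa, hxa⟩ := h.1
  obtain ⟨xb, hxb⟩ := h.2.1
  obtain ⟨xa', hxa'⟩ := hA'
  obtain ⟨xb', hxb'⟩ := hB'
  -- step lemma: LeftOf propagates to an adjacent occupied row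
  have step : ∀ k : ℤ, LeftOf A B k → (∃ x, (x, k + 1) ∈ A) → (∃ y, (y, k + 1) ∈ B) →
      LeftOf A B (k + 1) := by
    intro k hk ⟨u, hu⟩ ⟨v, hv⟩
    obtain ⟨x, hx1, hx2⟩ := poly_adj_share hA hk.1.choose_spec hu
    obtain ⟨y, hy1, hy2⟩ := poly_adj_share hB hk.2.1.choose_spec hv
    have hxy : x < y := hk.2.2 x y hx1 hy1
    rcases row_total hABd hAm hBm hx2 hy2 with h' | h'
    · exact h'
    · exact absurd (h'.2.2 y x hy2 hx2) (by omega)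
  have step' : ∀ k : ℤ, LeftOf A B k → (∃ x, (x, k - 1) ∈ A) → (∃ y, (y, k - 1) ∈ B) →
      LeftOf A B (k - 1) := by
    intro k hk ⟨u, hu⟩ ⟨v, hv⟩
    have hu' : (hk.1.choose, k - 1 + 1) ∈ A := by simpa using hk.1.choose_spec
    have hv' : (hk.2.1.choose, k - 1 + 1) ∈ B := by simpa using hk.2.1.choose_spec
    obtain ⟨x, hx1, hx2⟩ := poly_adj_share hA hu hu'
    obtain ⟨y, hy1, hy2⟩ := poly_adj_share hB hv hv'
    have hx2' : (x, k) ∈ A := by simpa using hx2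
    have hy2' : (y, k) ∈ B := by simpa using hy2
    have hxy : x < y := hk.2.2 x y hx2' hy2'
    rcases row_total hABd hAm hBm hx1 hy1 with h' | h'
    · exact h'
    · exact absurd (h'.2.2 y x hy1 hx1) (by omega)
  rcases le_total r r' with hrr | hrr
  · exact Int.le_induction (motive := fun k _ => k ≤ r' → LeftOf A B k) (fun _ => h)
      (fun k hk ih hk1 => step k (ih (by omega))
        (poly_rows_convex hA hxa hxa' (by omega) (by omega))
        (poly_rows_convex hB hxb hxb' (by omega) (by omega))) r' hrr le_rfl
  · exact Int.le_induction_down (motive := fun k _ => r' ≤ k → LeftOf A B k) (fun _ => h)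
      (fun k hk ih hk1 => step' k (ih (by omega))
        (poly_rows_convex hA hxa' hxa (by omega) (by omega))
        (poly_rows_convex hB hxb' hxb (by omega) (by omega))) r' hrr le_rfl

def Prec {n : ℕ} (S : Fin n → Finset (ℤ × ℤ)) (i j : Fin n) : Prop :=
  ∃ r, LeftOf (S i) (S j) r

lemma prec_irrefl {n : ℕ} {S : Fin n → Finset (ℤ × ℤ)} {i : Fin n} (h : Prec S i i) : False :=
  leftOf_asymm h.choose_spec h.choose_spec

lemma prec_asymm {n : ℕ} {S : Fin n → Finset (ℤ × ℤ)}
    (hpoly : ∀ i, IsPolyomino (S i)) (hdisj : Pairwise fun i j => Disjoint (S i) (S j))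
    (hmono : ∀ i, YMonotone (S i)) {i j : Fin n}
    (hij : Prec S i j) (hji : Prec S j i) : False := by
  rcases eq_or_ne i j with rfl | hne
  · exact prec_irrefl hij
  · obtain ⟨r1, h1⟩ := hij
    obtain ⟨r2, h2⟩ := hji
    have h1' : LeftOf (S i) (S j) r2 :=
      leftOf_consistent (hpoly i) (hpoly j) (hdisj hne) (hmono i) (hmono j) h1 h2.2.1 h2.1
    exact leftOf_asymm h1' h2

lemma prec_trans_of_share {n : ℕ} {S : Fin n → Finset (ℤ × ℤ)}
    (hpoly : ∀ i, IsPolyomino (S i)) (hdisj : Pairwise fun i j => Disjoint (S i) (S j))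
    (hmono : ∀ i, YMonotone (S i)) {i j k : Fin n}
    (hij : Prec S i j) (hjk : Prec S j k)
    {r : ℤ} (hri : ∃ x, (x, r) ∈ S i) (hrk : ∃ y, (y, r) ∈ S k) : Prec S i k := by
  rcases eq_or_ne i j with rfl | hij'
  · exact absurd hij prec_irrefl
  rcases eq_or_ne j k with rfl | hjk'
  · exact absurd hjk prec_irrefl
  rcases eq_or_ne i k with rfl | hik'
  · exact absurd (prec_asymm hpoly hdisj hmono hij hjk) id
  by_cases hrj : ∃ z, (z, r) ∈ S j
  · have l1 : LeftOf (S i) (S j) r :=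
      leftOf_consistent (hpoly i) (hpoly j) (hdisj hij') (hmono i) (hmono j)
        hij.choose_spec hri hrj
    have l2 : LeftOf (S j) (S k) r :=
      leftOf_consistent (hpoly j) (hpoly k) (hdisj hjk') (hmono j) (hmono k)
        hjk.choose_spec hrj hrk
    exact ⟨r, leftOf_compose l1 l2⟩
  · obtain ⟨r1, h1⟩ := hij
    obtain ⟨r2, h2⟩ := hjk
    push_neg at hrj
    have hcase : (∀ z ρ, (z, ρ) ∈ S j → r < ρ) ∨ (∀ z ρ, (z, ρ) ∈ S j → ρ < r) := by
      by_contra hc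
      push_neg at hc
      obtain ⟨⟨z1, ρ1, hz1, hρ1⟩, ⟨z2, ρ2, hz2, hρ2⟩⟩ := hc
      obtain ⟨w, hw⟩ := poly_rows_convex (hpoly j) hz1 hz2 hρ1 hρ2
      exact hrj w hw
    have hj1 : ∃ y, (y, r1) ∈ S j := h1.2.1
    have hj2 : ∃ z, (z, r2) ∈ S j := h2.1
    rcases hcase with hup | hdown
    · have hr1 : r < r1 := hup _ _ hj1.choose_spec
      have hr2 : r < r2 := hup _ _ hj2.choose_spec
      set r' := min r1 r2 with hr'
      have iA : ∃ x, (x, r') ∈ S i :=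
        poly_rows_convex (hpoly i) hri.choose_spec h1.1.choose_spec (by omega) (by simp [hr'])
      have kA : ∃ y, (y, r') ∈ S k :=
        poly_rows_convex (hpoly k) hrk.choose_spec h2.2.1.choose_spec (by omega) (by simp [hr'])
      have jA : ∃ z, (z, r') ∈ S j := by
        rcases le_total r1 r2 with hh | hh
        · rw [hr', min_eq_left hh]; exact hj1
        · rw [hr', min_eq_right hh]; exact hj2
      have l1 : LeftOf (S i) (S j) r' :=
        leftOf_consistent (hpoly i) (hpoly j) (hdisj hij') (hmono i) (hmono j) h1 iA jA
      have l2 : LeftOf (S j) (S k) r' :=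
        leftOf_consistent (hpoly j) (hpoly k) (hdisj hjk') (hmono j) (hmono k) h2 jA kA
      exact ⟨r', leftOf_compose l1 l2⟩
    · have hr1 : r1 < r := hdown _ _ hj1.choose_spec
      have hr2 : r2 < r := hdown _ _ hj2.choose_spec
      set r' := max r1 r2 with hr'
      have iA : ∃ x, (x, r') ∈ S i :=
        poly_rows_convex (hpoly i) h1.1.choose_spec hri.choose_spec (by simp [hr']) (by omega)
      have kA : ∃ y, (y, r') ∈ S k :=
        poly_rows_convex (hpoly k) h2.2.1.choose_spec hrk.choose_spec (by simp [hr']) (by omega)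
      have jA : ∃ z, (z, r') ∈ S j := by
        rcases le_total r1 r2 with hh | hh
        · rw [hr', max_eq_right hh]; exact hj2
        · rw [hr', max_eq_left hh]; exact hj1
      have l1 : LeftOf (S i) (S j) r' :=
        leftOf_consistent (hpoly i) (hpoly j) (hdisj hij') (hmono i) (hmono j) h1 iA jA
      have l2 : LeftOf (S j) (S k) r' :=
        leftOf_consistent (hpoly j) (hpoly k) (hdisj hjk') (hmono j) (hmono k) h2 jA kA
      exact ⟨r', leftOf_compose l1 l2⟩

lemma interval_cycle_core (m : ℕ) (hm : 4 ≤ m) (T : ℕ → Finset ℤ)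
    (hconv : ∀ k, ∀ x ∈ T k, ∀ y ∈ T k, ∀ z, x ≤ z → z ≤ y → z ∈ T k)
    (hadj : ∀ k < m, ∃ x, x ∈ T k ∧ x ∈ T (k + 1))
    (hTm : T m = T 0)
    (h1k : ∀ k, 3 ≤ k → k ≤ m - 1 → ∀ x ∈ T 1, x ∉ T k)
    (hlt : ∀ x ∈ T 0, ∀ y ∈ T 2, x < y) : False := by
  obtain ⟨p, hp1, hp2⟩ := hadj 0 (by omega)   -- p ∈ T 0 ∩ T 1
  obtain ⟨q, hq1, hq2⟩ := hadj 1 (by omega)   -- q ∈ T 1 ∩ T 2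
  have hpq : p < q := hlt p hp1 q hq2
  have hT1 : ∀ z, p ≤ z → z ≤ q → z ∈ T 1 := fun z h1 h2 => hconv 1 p hp2 q hq1 z h1 h2
  -- every element of T k for 3 ≤ k ≤ m-1 is > q
  have claim : ∀ k, 3 ≤ k → k ≤ m - 1 → ∀ x ∈ T k, q < x := by
    intro k hk3
    induction k, hk3 using Nat.le_induction with
    | base =>
      intro _ x hx
      obtain ⟨w, hw2, hw3⟩ := hadj 2 (by omega)
      have hpw : p < w := hlt p hp1 w hw2
      have hqw : q < w := by
        by_contra hc
        exact h1k 3 le_rfl (by omega) w (hT1 w (by omega) (by omega)) hw3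
      by_contra hc
      push_neg at hc
      rcases le_or_gt p x with h' | h'
      · exact h1k 3 le_rfl (by omega) x (hT1 x h' hc) hx
      · exact h1k 3 le_rfl (by omega) q (hT1 q (by omega) (le_refl q))
          (hconv 3 x hx w hw3 q (by omega) (by omega))
    | succ k hk ih =>
      intro hk1 x hx
      obtain ⟨w, hwk, hwk1⟩ := hadj k (by omega)
      have hqw : q < w := ih (by omega) w hwk
      by_contra hc
      push_neg at hc
      rcases le_or_gt p x with h' | h'
      · exact h1k (k + 1) (by omega) hk1 x (hT1 x h' hc) hx
      · exact h1k (k + 1) (by omega) hk1 q (hT1 q (by omega) (le_refl q))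
          (hconv (k + 1) x hx w hwk1 q (by omega) (by omega))
  obtain ⟨w, hw1, hw2⟩ := hadj (m - 1) (by omega)
  have hq : q < w := claim (m - 1) (by omega) le_rfl w hw1
  have : m - 1 + 1 = m := by omega
  rw [this, hTm] at hw2
  exact absurd (hlt w hw2 q hq2) (by omega)

lemma interval_cycle (m : ℕ) (hm : 4 ≤ m) (T : ℕ → Finset ℤ)
    (hconv : ∀ k, ∀ x ∈ T k, ∀ y ∈ T k, ∀ z, x ≤ z → z ≤ y → z ∈ T k)
    (hadj : ∀ k < m, ∃ x, x ∈ T k ∧ x ∈ T (k + 1))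
    (hTm : T m = T 0)
    (h02 : ∀ x ∈ T 0, x ∉ T 2)
    (h1k : ∀ k, 3 ≤ k → k ≤ m - 1 → ∀ x ∈ T 1, x ∉ T k) : False := by
  have htot : (∀ x ∈ T 0, ∀ y ∈ T 2, x < y) ∨ (∀ x ∈ T 2, ∀ y ∈ T 0, x < y) := by
    by_contra hc
    push_neg at hc
    obtain ⟨⟨a1, ha1, b1, hb1, h1⟩, ⟨a2, ha2, b2, hb2, h2⟩⟩ := hc
    have hne1 : b1 ≠ a1 := fun h => h02 a1 ha1 (h ▸ hb1)
    have hne2 : b2 ≠ a2 := fun h => h02 b2 hb2 (h ▸ ha2)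
    rcases le_or_gt b2 b1 with hcc | hcc
    · exact h02 b1 (hconv 0 b2 hb2 a1 ha1 b1 hcc (by omega)) hb1
    · exact h02 b2 hb2 (hconv 2 b1 hb1 a2 ha2 b2 (by omega) (by omega))
  rcases htot with hlt | hlt
  · exact interval_cycle_core m hm T hconv hadj hTm h1k hlt
  · refine interval_cycle_core m hm (fun k => (T k).image (fun x => -x)) ?_ ?_ ?_ ?_ ?_
    · intro k x hx y hy z h1 h2
      simp only [Finset.mem_image] at hx hy ⊢
      obtain ⟨x', hx', rfl⟩ := hx
      obtain ⟨y', hy', rfl⟩ := hy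
      exact ⟨-z, hconv k y' hy' x' hx' (-z) (by omega) (by omega), by omega⟩
    · intro k hk
      obtain ⟨x, h1, h2⟩ := hadj k hk
      exact ⟨-x, Finset.mem_image.mpr ⟨x, h1, rfl⟩, Finset.mem_image.mpr ⟨x, h2, rfl⟩⟩
    · simp only [hTm]
    · intro k hk3 hk1 x hx hx'
      simp only [Finset.mem_image] at hx hx'
      obtain ⟨x', hx', rfl⟩ := hx
      obtain ⟨y', hy', hxy⟩ := hx'
      have : y' = x' := by omega
      exact h1k k hk3 hk1 x' hx' (this ▸ hy')
    · intro x hx y hy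
      simp only [Finset.mem_image] at hx hy
      obtain ⟨x', hx', rfl⟩ := hx
      obtain ⟨y', hy', rfl⟩ := hy
      have := hlt y' hy' x' hx'
      omega

lemma mem_rows {A : Finset (ℤ × ℤ)} {r : ℤ} :
    r ∈ A.image Prod.snd ↔ ∃ x, (x, r) ∈ A := by
  simp only [Finset.mem_image]
  constructor
  · rintro ⟨⟨x, ρ⟩, hm, rfl⟩; exact ⟨x, hm⟩
  · rintro ⟨x, hx⟩; exact ⟨(x, r), hx, rfl⟩

lemma no_cycle {n : ℕ} {S : Fin n → Finset (ℤ × ℤ)}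
    (hpoly : ∀ i, IsPolyomino (S i)) (hdisj : Pairwise fun i j => Disjoint (S i) (S j))
    (hmono : ∀ i, YMonotone (S i)) (m : ℕ) :
    1 ≤ m → ∀ c : ℕ → Fin n, (∀ k < m, Prec S (c k) (c (k + 1))) → c m = c 0 → False := by
  induction m using Nat.strong_induction_on with
  | _ m ih =>
  intro hm c hchain hcm
  rcases (show m = 1 ∨ m = 2 ∨ m = 3 ∨ 4 ≤ m by omega) with rfl | rfl | rfl | hm4
  · have h0 := hchain 0 (by omega)
    rw [hcm] at h0
    exact prec_irrefl h0
  · have h0 := hchain 0 (by omega)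
    have h1 := hchain 1 (by omega)
    rw [show (1:ℕ) + 1 = 2 from rfl, hcm] at h1
    exact prec_asymm hpoly hdisj hmono h0 h1
  · have h0 := hchain 0 (by omega)
    have h1 := hchain 1 (by omega)
    have h2 := hchain 2 (by omega)
    rw [show (2:ℕ) + 1 = 3 from rfl, hcm] at h2
    obtain ⟨r, hL⟩ := h2
    exact prec_asymm hpoly hdisj hmono
      (prec_trans_of_share hpoly hdisj hmono h0 h1 hL.2.1 hL.1) ⟨r, hL⟩
  by_cases h02 : ∃ r : ℤ, (∃ x, (x, r) ∈ S (c 0)) ∧ (∃ y, (y, r) ∈ S (c 2))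
  · have hne : c 0 ≠ c 2 := by
      intro he
      have h1 := hchain 1 (by omega)
      rw [show (1:ℕ) + 1 = 2 from rfl, ← he] at h1
      exact prec_asymm hpoly hdisj hmono (hchain 0 (by omega)) h1
    obtain ⟨r, hr0, hr2⟩ := h02
    rcases row_total (hdisj hne) (hmono _) (hmono _) hr0.choose_spec hr2.choose_spec with
      hL | hL
    · -- skip c 1 : cycle of length m - 1
      refine ih (m - 1) (by omega) (by omega) (fun k => if k = 0 then c 0 else c (k + 1))
        ?_ ?_
      · intro k hk
        show Prec S (if k = 0 then c 0 else c (k + 1))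
          (if k + 1 = 0 then c 0 else c (k + 1 + 1))
        rw [if_neg (show ¬ k + 1 = 0 by omega)]
        by_cases hk0 : k = 0
        · rw [if_pos hk0, hk0]
          exact ⟨r, hL⟩
        · rw [if_neg hk0]
          exact hchain (k + 1) (by omega)
      · show (if m - 1 = 0 then c 0 else c (m - 1 + 1)) = (if 0 = 0 then c 0 else c (0 + 1))
        rw [if_neg (show ¬ m - 1 = 0 by omega), if_pos rfl, show m - 1 + 1 = m by omega, hcm]
    · -- 3-cycle c0 c1 c2
      refine ih 3 (by omega) (by omega) (fun k => if k = 3 then c 0 else c k) ?_ ?_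
      · intro k hk
        interval_cases k
        · simpa using hchain 0 (by omega)
        · simpa using hchain 1 (by omega)
        · show Prec S (if 2 = 3 then c 0 else c 2) (if 3 = 3 then c 0 else c 3)
          rw [if_neg (by omega), if_pos rfl]
          exact ⟨r, hL⟩
      · simp
  by_cases h1c : ∃ k, 3 ≤ k ∧ k ≤ m - 1 ∧
      ∃ r : ℤ, (∃ x, (x, r) ∈ S (c 1)) ∧ (∃ y, (y, r) ∈ S (c k))
  · obtain ⟨k, hk3, hk1, r, hr1, hrk⟩ := h1c
    by_cases hne : c 1 = c k
    · -- cycle c1 → ... → c k = c 1 of length k - 1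
      refine ih (k - 1) (by omega) (by omega) (fun j => c (j + 1)) ?_ ?_
      · intro j hj
        exact hchain (j + 1) (by omega)
      · show c (k - 1 + 1) = c (0 + 1)
        rw [show k - 1 + 1 = k by omega]
        exact hne.symm
    · rcases row_total (hdisj hne) (hmono _) (hmono _) hr1.choose_spec hrk.choose_spec with
        hL | hL
      · -- Prec (c 1) (c k) : cycle c1, ck, ..., c(m-1), c0 of length m - k + 2
        refine ih (m - k + 2) (by omega) (by omega)
          (fun j => if j = 0 then c 1 else if j ≤ m - k + 1 then c (k + j - 1) else c 1)
          ?_ ?_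
        · intro j hj
          show Prec S (if j = 0 then c 1 else if j ≤ m - k + 1 then c (k + j - 1) else c 1)
            (if j + 1 = 0 then c 1 else if j + 1 ≤ m - k + 1 then c (k + (j + 1) - 1) else c 1)
          rw [if_neg (show ¬ j + 1 = 0 by omega)]
          rcases (show j = 0 ∨ (1 ≤ j ∧ j ≤ m - k) ∨ j = m - k + 1 by omega) with
            rfl | ⟨hj1, hj2⟩ | rfl
          · rw [if_pos rfl, if_pos (show 0 + 1 ≤ m - k + 1 by omega),
              show k + (0 + 1) - 1 = k by omega]
            exact ⟨r, hL⟩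
          · rw [if_neg (show ¬ j = 0 by omega), if_pos (show j ≤ m - k + 1 by omega),
              if_pos (show j + 1 ≤ m - k + 1 by omega),
              show k + (j + 1) - 1 = (k + j - 1) + 1 by omega]
            exact hchain (k + j - 1) (by omega)
          · rw [if_neg (show ¬ m - k + 1 = 0 by omega), if_pos le_rfl,
              if_neg (show ¬ m - k + 1 + 1 ≤ m - k + 1 by omega),
              show k + (m - k + 1) - 1 = m by omega, hcm]
            exact hchain 0 (by omega)
        · show (if m - k + 2 = 0 then c 1 else if m - k + 2 ≤ m - k + 1 then
              c (k + (m - k + 2) - 1) else c 1) = (if 0 = 0 then c 1 else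
              if 0 ≤ m - k + 1 then c (k + 0 - 1) else c 1)
          rw [if_neg (show ¬ m - k + 2 = 0 by omega),
            if_neg (show ¬ m - k + 2 ≤ m - k + 1 by omega), if_pos rfl]
      · -- Prec (c k) (c 1) : cycle c1, c2, ..., ck of length k
        refine ih k (by omega) (by omega) (fun j => if j = k then c 1 else c (j + 1)) ?_ ?_
        · intro j hj
          show Prec S (if j = k then c 1 else c (j + 1))
            (if j + 1 = k then c 1 else c (j + 1 + 1))
          rw [if_neg (show ¬ j = k by omega)]
          by_cases hjk : j + 1 = k
          · rw [if_pos hjk, hjk]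
            exact ⟨r, hL⟩
          · rw [if_neg hjk]
            exact hchain (j + 1) (by omega)
        · show (if k = k then c 1 else c (k + 1)) = (if 0 = k then c 1 else c (0 + 1))
          rw [if_pos rfl, if_neg (show ¬ 0 = k by omega)]
  · -- chordless cycle: impossible by the interval lemma
    push_neg at h02 h1c
    refine interval_cycle m hm4 (fun k => (S (c k)).image Prod.snd) ?_ ?_ ?_ ?_ ?_
    · intro k x hx y hy z h1 h2
      rw [mem_rows] at hx hy ⊢
      obtain ⟨u, hu⟩ := hx
      obtain ⟨v, hv⟩ := hy
      exact poly_rows_convex (hpoly _) hu hv h1 h2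
    · intro k hk
      obtain ⟨r, hL⟩ := hchain k hk
      exact ⟨r, mem_rows.mpr hL.1, mem_rows.mpr hL.2.1⟩
    · simp only [hcm]
    · intro x hx hx'
      rw [mem_rows] at hx hx'
      obtain ⟨v, hv⟩ := hx'
      exact h02 x hx v hv
    · intro k hk3 hk1 x hx hx'
      rw [mem_rows] at hx hx'
      obtain ⟨v, hv⟩ := hx'
      exact h1c k hk3 hk1 x hx v hv

lemma transGen_irrefl {n : ℕ} {S : Fin n → Finset (ℤ × ℤ)}
    (hpoly : ∀ i, IsPolyomino (S i)) (hdisj : Pairwise fun i j => Disjoint (S i) (S j))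
    (hmono : ∀ i, YMonotone (S i)) {i : Fin n}
    (h : Relation.TransGen (Prec S) i i) : False := by
  have key : ∀ j, Relation.TransGen (Prec S) i j → ∃ m, 1 ≤ m ∧ ∃ c : ℕ → Fin n,
      c 0 = i ∧ c m = j ∧ ∀ k < m, Prec S (c k) (c (k + 1)) := by
    intro j hj
    induction hj with
    | @single b hij =>
      refine ⟨1, le_rfl, fun k => if k = 0 then i else b, by simp, by simp, ?_⟩
      intro k hk
      have : k = 0 := by omega
      subst this
      simpa using hij
    | @tail b c' hab hbc ihab =>
      obtain ⟨m, hm1, c, hc0, hcm, hchain⟩ := ihab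
      refine ⟨m + 1, by omega, fun k => if k ≤ m then c k else c', ?_, ?_, ?_⟩
      · simp [show 0 ≤ m by omega, hc0]
      · simp
      · intro k hk
        show Prec S (if k ≤ m then c k else c') (if k + 1 ≤ m then c (k + 1) else c')
        rw [if_pos (show k ≤ m by omega)]
        by_cases hkm : k + 1 ≤ m
        · rw [if_pos hkm]
          exact hchain k (by omega)
        · rw [if_neg hkm, show k = m by omega, hcm]
          exact hbc
  obtain ⟨m, hm1, c, hc0, hcm, hchain⟩ := key i h
  exact no_cycle hpoly hdisj hmono m hm1 c hchain (by rw [hcm, hc0])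

/-- rank of a piece: the number of pieces transitively to its left. -/
noncomputable def precRank {n : ℕ} (S : Fin n → Finset (ℤ × ℤ)) (i : Fin n) : ℕ :=
  Set.ncard {j | Relation.TransGen (Prec S) j i}

lemma precRank_lt {n : ℕ} {S : Fin n → Finset (ℤ × ℤ)}
    (hpoly : ∀ i, IsPolyomino (S i)) (hdisj : Pairwise fun i j => Disjoint (S i) (S j))
    (hmono : ∀ i, YMonotone (S i)) {i j : Fin n} (hij : Prec S i j) :
    precRank S i < precRank S j := by
  apply Set.ncard_lt_ncard _ (Set.toFinite _)
  constructor
  · intro k hk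
    exact Relation.TransGen.tail hk hij
  · intro hsub
    exact transGen_irrefl hpoly hdisj hmono (hsub (Relation.TransGen.single hij))


-- ===== auxiliary geometric lemmas =====

def tr (c : ℝ) : Plane → Plane := fun p => p + c • EuclideanSpace.single (0 : Fin 2) (1 : ℝ)

def e2 : Plane := EuclideanSpace.single (1 : Fin 2) (1 : ℝ)

lemma tr_apply0 (c : ℝ) (p : Plane) : tr c p 0 = p 0 + c := by
  simp [tr, EuclideanSpace.single_apply]

lemma tr_apply1 (c : ℝ) (p : Plane) : tr c p 1 = p 1 := by
  simp [tr, EuclideanSpace.single_apply]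

lemma tr_tr (u v : ℝ) (p : Plane) : tr u (tr v p) = tr (u + v) p := by
  simp [tr, add_smul]
  module

lemma tr_zero : tr 0 = id := by
  funext p
  simp [tr]

lemma isometry_tr (c : ℝ) : Isometry (tr c) := isometry_add_right _

lemma dist_tr (a : ℝ) (q : Plane) : dist (tr a q) q = |a| := by
  rw [dist_eq_norm]
  simp [tr, norm_smul, EuclideanSpace.norm_single]

lemma dist_e2 (a : ℝ) (q : Plane) : dist (q + a • e2) q = |a| := by
  rw [dist_eq_norm]
  simp [e2, norm_smul, EuclideanSpace.norm_single]

lemma e2_apply1 (q : Plane) (a : ℝ) : (q + a • e2) 1 = q 1 + a := by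
  simp [e2, EuclideanSpace.single_apply]

lemma mem_tr_region {A : Finset (ℤ × ℤ)} {u : ℝ} {p : Plane} :
    p ∈ tr u '' Region A ↔ ∃ c ∈ A, ((c.1 : ℝ) + u ≤ p 0 ∧ p 0 ≤ c.1 + 1 + u) ∧
      ((c.2 : ℝ) ≤ p 1 ∧ p 1 ≤ c.2 + 1) := by
  constructor
  · rintro ⟨q, ⟨c, hc, h1, h2⟩, rfl⟩
    exact ⟨c, hc, ⟨by rw [tr_apply0]; linarith [h1.1], by rw [tr_apply0]; linarith [h1.2]⟩,
      ⟨by rw [tr_apply1]; exact h2.1, by rw [tr_apply1]; exact h2.2⟩⟩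
  · rintro ⟨c, hc, hx, hy⟩
    refine ⟨tr (-u) p, ⟨c, hc, ?_, ?_⟩, ?_⟩
    · rw [tr_apply0]
      constructor <;> [linarith [hx.1]; linarith [hx.2]]
    · rw [tr_apply1]
      exact ⟨hy.1, hy.2⟩
    · rw [tr_tr]
      simp [tr_zero]

lemma coord_dist_le (p q : Plane) (i : Fin 2) : dist (p i) (q i) ≤ dist p q := by
  rw [EuclideanSpace.dist_eq]
  have := Finset.single_le_sum (f := fun j => dist (p j) (q j) ^ 2)
    (fun j _ => sq_nonneg _) (Finset.mem_univ i)
  calc dist (p i) (q i) = Real.sqrt (dist (p i) (q i) ^ 2) := by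
        rw [Real.sqrt_sq dist_nonneg]
    _ ≤ _ := Real.sqrt_le_sqrt this

lemma cell_row_eq {c2 r : ℤ} {y : ℝ} (h1 : (c2 : ℝ) ≤ y) (h2 : y ≤ c2 + 1)
    (hr : (r : ℝ) < y) (hr1 : y < r + 1) : c2 = r := by
  have a1 : (c2 : ℝ) < r + 1 := lt_of_le_of_lt h1 hr1
  have a2 : (r : ℝ) < c2 + 1 := lt_of_lt_of_le hr h2
  have b1 : c2 < r + 1 := by exact_mod_cast a1
  have b2 : r < c2 + 1 := by exact_mod_cast a2
  omega

lemma interior_bound {A : Finset (ℤ × ℤ)} {u : ℝ} {q : Plane} {r : ℤ}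
    (hr : (r : ℝ) < q 1) (hr1 : q 1 < r + 1)
    (hq : q ∈ interior (tr u '' Region A)) :
    ∃ xlo xhi : ℤ, (xlo, r) ∈ A ∧ (xhi, r) ∈ A ∧
      (xlo : ℝ) + u < q 0 ∧ q 0 < (xhi : ℝ) + 1 + u := by
  obtain ⟨ε, hε, hball⟩ := Metric.isOpen_iff.mp isOpen_interior q hq
  have hmem : ∀ a : ℝ, |a| < ε → tr a q ∈ tr u '' Region A := fun a ha =>
    interior_subset (hball (by rw [Metric.mem_ball, dist_tr]; exact ha))
  have habs : |ε / 2| < ε := by rw [abs_of_pos (by linarith)]; linarith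
  have habs' : |-(ε / 2)| < ε := by rw [abs_neg]; exact habs
  obtain ⟨c, hc, hcx, hcy⟩ := mem_tr_region.mp (hmem (ε / 2) habs)
  obtain ⟨d, hd, hdx, hdy⟩ := mem_tr_region.mp (hmem (-(ε / 2)) habs')
  simp only [tr_apply0, tr_apply1] at hcx hcy hdx hdy
  have hc2 : c.2 = r := cell_row_eq hcy.1 hcy.2 hr hr1
  have hd2 : d.2 = r := cell_row_eq hdy.1 hdy.2 hr hr1
  refine ⟨d.1, c.1, ?_, ?_, ?_, ?_⟩
  · rw [← hd2]; exact hd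
  · rw [← hc2]; exact hc
  · have := hdx.1; linarith
  · have := hcx.2; linarith

lemma exists_nonint_near (x : ℝ) {ε : ℝ} (hε : 0 < ε) :
    ∃ a : ℝ, |a| < ε ∧ ∀ z : ℤ, (z : ℝ) ≠ x + a := by
  set δ := min ε 1 / 2 with hδ
  have hδ0 : 0 < δ := by positivity
  have hδε : δ < ε := by
    rcases le_total ε 1 with h | h
    · simp only [hδ, min_eq_left h]; linarith
    · simp only [hδ, min_eq_right h]; linarith
  have hδ1 : δ ≤ 1 / 2 := by
    simp only [hδ]
    have : min ε 1 ≤ 1 := min_le_right _ _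
    linarith
  by_cases h1 : ∀ z : ℤ, (z : ℝ) ≠ x + δ
  · exact ⟨δ, by rw [abs_of_pos hδ0]; exact hδε, h1⟩
  · push_neg at h1
    obtain ⟨z, hz⟩ := h1
    refine ⟨δ / 2, by rw [abs_of_pos (by linarith)]; linarith, ?_⟩
    intro w hw
    have : (z : ℝ) - w = δ / 2 := by linarith
    have h2 : ((z - w : ℤ) : ℝ) = δ / 2 := by push_cast; linarith
    have h3 : (0 : ℝ) < ((z - w : ℤ) : ℝ) := by rw [h2]; linarith
    have h4 : ((z - w : ℤ) : ℝ) < 1 := by rw [h2]; linarith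
    have h5 : (0 : ℤ) < z - w := by exact_mod_cast h3
    have h6 : (z - w : ℤ) < 1 := by exact_mod_cast h4
    omega

lemma no_common_interior {A B : Finset (ℤ × ℤ)} {u v : ℝ} {q : Plane} {r : ℤ}
    (hr : (r : ℝ) < q 1) (hr1 : q 1 < r + 1)
    (hqa : q ∈ interior (tr u '' Region A)) (hqb : q ∈ interior (tr v '' Region B))
    (hL : ∀ x y, (x, r) ∈ A → (y, r) ∈ B → x < y) (huv : u ≤ v) : False := by
  obtain ⟨_, xhi, _, hxhi, _, hqx⟩ := interior_bound hr hr1 hqa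
  obtain ⟨ylo, _, hylo, _, hqy, _⟩ := interior_bound hr hr1 hqb
  have hlt : xhi < ylo := hL xhi ylo hxhi hylo
  have : (xhi : ℝ) + 1 ≤ ylo := by exact_mod_cast hlt
  linarith

lemma exists_good_point {U : Set Plane} (hU : IsOpen U) {p : Plane} (hp : p ∈ U) :
    ∃ q ∈ U, ∃ r : ℤ, (r : ℝ) < q 1 ∧ q 1 < r + 1 := by
  obtain ⟨ε, hε, hball⟩ := Metric.isOpen_iff.mp hU p hp
  obtain ⟨a, ha, hnonint⟩ := exists_nonint_near (p 1) hε
  refine ⟨p + a • e2, hball (by rw [Metric.mem_ball, dist_e2]; exact ha), ⌊p 1 + a⌋, ?_, ?_⟩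
  · rw [e2_apply1]
    rcases lt_or_eq_of_le (Int.floor_le (p 1 + a)) with h | h
    · exact h
    · exact absurd h (hnonint ⌊p 1 + a⌋)
  · rw [e2_apply1]
    push_cast; exact Int.lt_floor_add_one (p 1 + a)

lemma region_nonempty {A : Finset (ℤ × ℤ)} (hA : A.Nonempty) : (Region A).Nonempty := by
  obtain ⟨c, hc⟩ := hA
  refine ⟨(WithLp.equiv 2 (Fin 2 → ℝ)).symm ![(c.1 : ℝ), (c.2 : ℝ)], c, hc, ?_, ?_⟩ <;>
    simp


/-- A system of pairwise disjoint y-monotone polyominoes can be spread apart by a valid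
motion consisting only of horizontal translations: for every `d > 0` there is such a motion
after which all pieces are pairwise at distance at least `d`. -/
theorem ymonotone_spread_by_horizontal_translations (n : ℕ) (S : Fin n → Finset (ℤ × ℤ))
    (hpoly : ∀ i, IsPolyomino (S i))
    (hdisj : Pairwise fun i j => Disjoint (S i) (S j))
    (hmono : ∀ i, YMonotone (S i)) :
    ∀ d : ℝ, 0 < d → ∃ g : Fin n → unitInterval → Plane → Plane,
      IsValidMotion (fun i => Region (S i)) g ∧
      (∀ i t, ∃ c : ℝ, ∀ p : Plane, g i t p 0 = p 0 + c ∧ g i t p 1 = p 1) ∧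
      Pairwise fun i j =>
        d ≤ setDist (g i 1 '' Region (S i)) (g j 1 '' Region (S j)) := by
  intro d hd
  classical
  -- global bound on x-coordinates of cells
  set F : Finset ℕ := Finset.univ.biUnion (fun i => (S i).image (fun c => c.1.natAbs)) with hF
  set B : ℕ := F.sup id with hB
  have hbound : ∀ i : Fin n, ∀ c ∈ S i, |(c.1 : ℝ)| ≤ (B : ℝ) := by
    intro i c hc
    have h1 : c.1.natAbs ∈ F := Finset.mem_biUnion.mpr
      ⟨i, Finset.mem_univ i, Finset.mem_image_of_mem _ hc⟩
    have h2 : c.1.natAbs ≤ B := Finset.le_sup (f := id) h1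
    have h3 : (c.1.natAbs : ℝ) ≤ (B : ℝ) := by exact_mod_cast h2
    rwa [Nat.cast_natAbs, Int.cast_abs] at h3
  set M : ℝ := d + 2 * (B : ℝ) + 2 with hM
  have hBnn : (0 : ℝ) ≤ (B : ℝ) := Nat.cast_nonneg B
  have hM0 : 0 < M := by simp only [hM]; linarith
  set ρ : Fin n → ℕ := fun i => n * precRank S i + i.val with hρ
  have hρlt : ∀ i j, Prec S i j → ρ i < ρ j := by
    intro i j hij
    have h1 := precRank_lt hpoly hdisj hmono hij
    have h2 : i.val < n := i.isLt
    have h3 : n * (precRank S i + 1) ≤ n * precRank S j := Nat.mul_le_mul_left n h1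
    have h4 : n * (precRank S i + 1) = n * precRank S i + n := by ring
    simp only [hρ]
    omega
  have hρinj : ∀ i j : Fin n, i ≠ j → ρ i ≠ ρ j := by
    intro i j hne heq
    apply hne
    have h1 : ρ i % n = i.val := by
      simp only [hρ, Nat.mul_add_mod]
      exact Nat.mod_eq_of_lt i.isLt
    have h2 : ρ j % n = j.val := by
      simp only [hρ, Nat.mul_add_mod]
      exact Nat.mod_eq_of_lt j.isLt
    exact Fin.ext (by rw [← h1, ← h2, heq])
  -- the speeds are compatible with the left-of relation at every time
  have hspeed : ∀ (t : unitInterval) (i j : Fin n), Prec S i j →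
      (t : ℝ) * M * (ρ i : ℝ) ≤ (t : ℝ) * M * (ρ j : ℝ) := by
    intro t i j hij
    have h1 : (ρ i : ℝ) ≤ (ρ j : ℝ) := by exact_mod_cast (hρlt i j hij).le
    have h2 : (0 : ℝ) ≤ (t : ℝ) * M := mul_nonneg t.2.1 hM0.le
    calc (t : ℝ) * M * (ρ i : ℝ) = ((t : ℝ) * M) * (ρ i : ℝ) := by ring
      _ ≤ ((t : ℝ) * M) * (ρ j : ℝ) := mul_le_mul_of_nonneg_left h1 h2
      _ = (t : ℝ) * M * (ρ j : ℝ) := by ring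
  refine ⟨fun i t p => tr ((t : ℝ) * M * (ρ i : ℝ)) p, ⟨?_, ?_, ?_, ?_⟩, ?_, ?_⟩
  · intro i t
    exact isometry_tr _
  · intro i
    funext p
    show tr (((0 : unitInterval) : ℝ) * M * (ρ i : ℝ)) p = p
    have h0 : ((0 : unitInterval) : ℝ) = 0 := rfl
    rw [h0, zero_mul, zero_mul, tr_zero, id]
  · intro i
    simp only [tr]
    fun_prop
  · -- interiors pairwise disjoint at every time
    intro t i j hne
    rw [Set.disjoint_left]
    intro p hpi hpj
    obtain ⟨q, ⟨hqa, hqb⟩, r, hr, hr1⟩ :=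
      exists_good_point (isOpen_interior.inter isOpen_interior) (Set.mem_inter hpi hpj)
    obtain ⟨x1, -, hx1, -, -, -⟩ := interior_bound hr hr1 hqa
    obtain ⟨y1, -, hy1, -, -, -⟩ := interior_bound hr hr1 hqb
    rcases row_total (hdisj hne) (hmono i) (hmono j) hx1 hy1 with hL | hL
    · exact no_common_interior hr hr1 hqa hqb hL.2.2 (hspeed t i j ⟨r, hL⟩)
    · exact no_common_interior hr hr1 hqb hqa hL.2.2 (hspeed t j i ⟨r, hL⟩)
  · intro i t
    exact ⟨(t : ℝ) * M * (ρ i : ℝ), fun p => ⟨tr_apply0 _ _, tr_apply1 _ _⟩⟩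
  · -- final separation
    intro i j hne
    have h1c : ((1 : unitInterval) : ℝ) = 1 := rfl
    apply le_csInf
    · obtain ⟨p, hp⟩ := region_nonempty (hpoly i).1
      obtain ⟨q, hq⟩ := region_nonempty (hpoly j).1
      exact ⟨_, Set.mem_image2_of_mem (Set.mem_image_of_mem _ hp)
        (Set.mem_image_of_mem _ hq)⟩
    · rintro b ⟨p, hp, q, hq, rfl⟩
      set u : ℝ := ((1 : unitInterval) : ℝ) * M * (ρ i : ℝ) with hu
      set v : ℝ := ((1 : unitInterval) : ℝ) * M * (ρ j : ℝ) with hv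
      obtain ⟨c, hc, hcx, -⟩ := mem_tr_region.mp hp
      obtain ⟨e, he, hex, -⟩ := mem_tr_region.mp hq
      have hcb := abs_le.mp (hbound i c hc)
      have heb := abs_le.mp (hbound j e he)
      have h1 : |p 0 - u| ≤ (B : ℝ) + 1 :=
        abs_le.mpr ⟨by linarith [hcx.1], by linarith [hcx.2]⟩
      have h2 : |q 0 - v| ≤ (B : ℝ) + 1 :=
        abs_le.mpr ⟨by linarith [hex.1], by linarith [hex.2]⟩
      have hMuv : M ≤ |u - v| := by
        have hzz : (1 : ℝ) ≤ |(ρ i : ℝ) - (ρ j : ℝ)| := by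
          have h := hρinj i j hne
          have h' : ((ρ i : ℕ) : ℤ) ≠ ((ρ j : ℕ) : ℤ) := by exact_mod_cast h
          have h2' : 1 ≤ |((ρ i : ℕ) : ℤ) - ((ρ j : ℕ) : ℤ)| := by
            rcases h'.lt_or_gt with hlt | hlt
            · rw [abs_of_neg (by omega)]; omega
            · rw [abs_of_pos (by omega)]; omega
          calc (1 : ℝ) = ((1 : ℤ) : ℝ) := by norm_num
            _ ≤ ((|((ρ i : ℕ) : ℤ) - ((ρ j : ℕ) : ℤ)| : ℤ) : ℝ) := by exact_mod_cast h2'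
            _ = |(ρ i : ℝ) - (ρ j : ℝ)| := by push_cast [Int.cast_abs]; norm_num
        have huvm : u - v = M * ((ρ i : ℝ) - (ρ j : ℝ)) := by
          simp only [hu, hv, h1c]; ring
        rw [huvm, abs_mul, abs_of_pos hM0]
        nlinarith
      have htri : |u - v| ≤ |p 0 - u| + |p 0 - q 0| + |q 0 - v| := by
        have e1 : u - v = -(p 0 - u) + ((p 0 - q 0) + (q 0 - v)) := by ring
        calc |u - v| = |-(p 0 - u) + ((p 0 - q 0) + (q 0 - v))| := by rw [← e1]
          _ ≤ |-(p 0 - u)| + |(p 0 - q 0) + (q 0 - v)| := abs_add_le _ _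
          _ ≤ |-(p 0 - u)| + (|p 0 - q 0| + |q 0 - v|) :=
              add_le_add_right (abs_add_le _ _) _
          _ = |p 0 - u| + |p 0 - q 0| + |q 0 - v| := by rw [abs_neg]; ring
      have h8 : d ≤ |p 0 - q 0| := by
        simp only [hM] at hMuv
        linarith
      calc d ≤ |p 0 - q 0| := h8
        _ = dist (p 0) (q 0) := (Real.dist_eq _ _).symm
        _ ≤ dist p q := coord_dist_le p q 0
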